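/- Let g(x) = Σ_{k=0}^∞ a_k x^k have positive radius of convergence, G(y) = g(1/y), and c ∈ ℝ. Then lim_{y→∞} [(y+1)G(y+c) - yG(y+c-1)] = a₀. -/

import Mathlib

open Filter Topology

theorem keller_general_limit_shifted (a : ℕ → ℝ) (ϱ : ℝ) (hϱ : 0 < ϱ)
    (hconv : ∀ x : ℝ, |x| < ϱ → Summable (fun k : ℕ => a k * x ^ k))
    (G : ℝ → ℝ) (hG : ∀ y : ℝ, G y = ∑' k : ℕ, a k * (1 / y) ^ k)
    (c : ℝ) :
    Filter.Tendsto (fun y : ℝ => (y + 1) * G (y + c) - y * G (y + c - 1)) Filter.atTop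
      (nhds (a 0)) := by
  set r : ℝ := min (ϱ / 4) 1 with hrdef
  have hr0 : 0 < r := lt_min (by linarith) one_pos
  have hr1 : r ≤ 1 := min_le_right _ _
  have hrq : r ≤ ϱ / 4 := min_le_left _ _
  -- absolute summability of ∑ |a k| r^k
  have hhalf : |ϱ / 2| < ϱ := by rw [abs_of_pos (by linarith)]; linarith
  have hs2 : Summable (fun k : ℕ => a k * (ϱ / 2) ^ k) := hconv _ hhalf
  have htends : Tendsto (fun k : ℕ => |a k * (ϱ / 2) ^ k|) atTop (𝓝 0) := by
    simpa using hs2.tendsto_atTop_zero.abs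
  obtain ⟨M, hM⟩ := htends.bddAbove_range
  simp only [mem_upperBounds, Set.mem_range, forall_exists_index] at hM
  have hM' : ∀ k : ℕ, |a k * (ϱ / 2) ^ k| ≤ M := fun k => hM _ k rfl
  have habs : Summable (fun k : ℕ => |a k| * r ^ k) := by
    have hgeo : Summable (fun k : ℕ => M * (1 / 2 : ℝ) ^ k) :=
      (summable_geometric_of_lt_one (by norm_num) (by norm_num)).mul_left M
    refine Summable.of_nonneg_of_le (fun k => by positivity) (fun k => ?_) hgeo
    have h1 : |a k| * r ^ k = |a k * (ϱ / 2) ^ k| * (r / (ϱ / 2)) ^ k := by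
      rw [abs_mul, abs_pow, abs_of_pos (by linarith : (0:ℝ) < ϱ / 2), mul_assoc, ← mul_pow]
      congr 2
      field_simp
    rw [h1]
    have h2 : (0:ℝ) ≤ r / (ϱ / 2) := by positivity
    have h3 : r / (ϱ / 2) ≤ 1 / 2 := by
      rw [div_le_div_iff₀ (by linarith) (by norm_num)]; linarith
    exact mul_le_mul (hM' k) (pow_le_pow_left₀ h2 h3 k) (by positivity)
      (le_trans (abs_nonneg _) (hM' 0))
  -- the termwise function
  set F : ℝ → ℕ → ℝ := fun y k =>
    a k * ((y + 1) * (1 / (y + c)) ^ k - y * (1 / (y + c - 1)) ^ k) with hFdef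
  set L : ℕ → ℝ := fun k => if k = 0 then a 0 else 0 with hLdef
  have hLsum : (∑' k : ℕ, L k) = a 0 := tsum_ite_eq 0 (fun _ => a 0)
  have hbound_sum : Summable (fun k : ℕ => (4 / r) * (|a k| * r ^ k)) := habs.mul_left _
  -- basic limits
  have hc1 : Tendsto (fun y : ℝ => 1 / (y + c)) atTop (𝓝 0) := by
    simpa [one_div, Pi.inv_def] using (tendsto_atTop_add_const_right atTop c tendsto_id).inv_tendsto_atTop
  have hc2 : Tendsto (fun y : ℝ => 1 / (y + c - 1)) atTop (𝓝 0) := by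
    have h := (tendsto_atTop_add_const_right atTop (c - 1)
      (tendsto_id (α := ℝ))).inv_tendsto_atTop
    refine h.congr fun y => ?_
    show (y + (c - 1))⁻¹ = 1 / (y + c - 1)
    rw [one_div]
    congr 1
    ring
  have hA : Tendsto (fun y : ℝ => (y + 1) * (1 / (y + c))) atTop (𝓝 1) := by
    have heq : ∀ᶠ y : ℝ in atTop, 1 + (1 - c) * (1 / (y + c)) = (y + 1) * (1 / (y + c)) := by
      filter_upwards [eventually_gt_atTop (-c)] with y hy
      have h : y + c ≠ 0 := by intro h; rw [neg_lt] at hy; nlinarith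
      field_simp
      ring
    have := (tendsto_const_nhds.add (hc1.const_mul (1 - c))).congr' heq
    simpa using this
  have hB : Tendsto (fun y : ℝ => y * (1 / (y + c - 1))) atTop (𝓝 1) := by
    have heq : ∀ᶠ y : ℝ in atTop, 1 + (1 - c) * (1 / (y + c - 1)) = y * (1 / (y + c - 1)) := by
      filter_upwards [eventually_gt_atTop (1 - c)] with y hy
      have h : y + c - 1 ≠ 0 := by intro h; nlinarith
      field_simp
      ring
    have := (tendsto_const_nhds.add (hc2.const_mul (1 - c))).congr' heq
    simpa using this
  -- pointwise limits of F
  have hlim : ∀ k : ℕ, Tendsto (fun y : ℝ => F y k) atTop (𝓝 (L k)) := by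
    intro k
    match k with
    | 0 =>
      have heq : ∀ y : ℝ, F y 0 = a 0 := fun y => by simp [hFdef]
      have : L 0 = a 0 := by simp [hLdef]
      rw [this]
      exact Tendsto.congr (fun y => (heq y).symm) tendsto_const_nhds
    | (j + 1) =>
      have h1 : Tendsto (fun y : ℝ => (y + 1) * (1 / (y + c)) ^ (j + 1)) atTop
          (𝓝 ((0:ℝ) ^ j)) := by
        have := hA.mul (hc1.pow j)
        rw [one_mul] at this
        refine this.congr fun y => ?_
        ring
      have h2 : Tendsto (fun y : ℝ => y * (1 / (y + c - 1)) ^ (j + 1)) atTop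
          (𝓝 ((0:ℝ) ^ j)) := by
        have := hB.mul (hc2.pow j)
        rw [one_mul] at this
        refine this.congr fun y => ?_
        ring
      have := (h1.sub h2).const_mul (a (j + 1))
      have hL0 : L (j + 1) = 0 := by simp [hLdef]
      rw [hL0]
      simpa [hFdef] using this
  -- the uniform bound
  have h_bound : ∀ᶠ y : ℝ in atTop, ∀ k : ℕ, |F y k| ≤ (4 / r) * (|a k| * r ^ k) := by
    filter_upwards [eventually_ge_atTop (1 / r + 1 - c), eventually_ge_atTop (3 - 2 * c),
      eventually_ge_atTop 1] with y hy hy2 hy1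
    have hyc1 : 1 / r ≤ y + c - 1 := by linarith
    have hyc1pos : 0 < y + c - 1 := lt_of_lt_of_le (by positivity) hyc1
    have hycpos : 0 < y + c := by linarith
    have hinv1 : 1 / (y + c - 1) ≤ r := by
      rw [div_le_iff₀ hyc1pos]
      have := (div_le_iff₀ hr0).1 hyc1
      linarith [mul_comm r (y + c - 1)]
    have hinv2 : 1 / (y + c) ≤ r := by
      refine le_trans ?_ hinv1
      apply one_div_le_one_div_of_le hyc1pos
      linarith
    have hinv1nn : (0:ℝ) ≤ 1 / (y + c - 1) := by positivity
    have hinv2nn : (0:ℝ) ≤ 1 / (y + c) := by positivity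
    have hrat1 : (y + 1) * (1 / (y + c)) ≤ 2 := by
      rw [mul_one_div, div_le_iff₀ hycpos]; linarith
    have hrat2 : y * (1 / (y + c - 1)) ≤ 2 := by
      rw [mul_one_div, div_le_iff₀ hyc1pos]; linarith
    have h4r : (1:ℝ) ≤ 4 / r := by
      rw [le_div_iff₀ hr0]; linarith
    intro k
    match k with
    | 0 =>
      have : F y 0 = a 0 := by simp [hFdef]
      rw [this]
      simp only [pow_zero, mul_one]
      nlinarith [abs_nonneg (a 0)]
    | (j + 1) =>
      have hT1 : (y + 1) * (1 / (y + c)) ^ (j + 1) ≤ 2 * r ^ j := by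
        have : (y + 1) * (1 / (y + c)) ^ (j + 1)
            = ((y + 1) * (1 / (y + c))) * (1 / (y + c)) ^ j := by ring
        rw [this]
        exact mul_le_mul hrat1 (pow_le_pow_left₀ hinv2nn hinv2 j) (by positivity)
          (by norm_num)
      have hT2 : y * (1 / (y + c - 1)) ^ (j + 1) ≤ 2 * r ^ j := by
        have : y * (1 / (y + c - 1)) ^ (j + 1)
            = (y * (1 / (y + c - 1))) * (1 / (y + c - 1)) ^ j := by ring
        rw [this]
        exact mul_le_mul hrat2 (pow_le_pow_left₀ hinv1nn hinv1 j) (by positivity)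
          (by norm_num)
      have hT1nn : (0:ℝ) ≤ (y + 1) * (1 / (y + c)) ^ (j + 1) := by positivity
      have hT2nn : (0:ℝ) ≤ y * (1 / (y + c - 1)) ^ (j + 1) := by positivity
      have habsF : |F y (j + 1)| ≤ |a (j + 1)| * (4 * r ^ j) := by
        rw [hFdef]
        simp only [abs_mul]
        refine mul_le_mul_of_nonneg_left ?_ (abs_nonneg _)
        calc |(y + 1) * (1 / (y + c)) ^ (j + 1) - y * (1 / (y + c - 1)) ^ (j + 1)|
            ≤ |(y + 1) * (1 / (y + c)) ^ (j + 1)| + |y * (1 / (y + c - 1)) ^ (j + 1)| :=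
              abs_sub _ _
          _ = (y + 1) * (1 / (y + c)) ^ (j + 1) + y * (1 / (y + c - 1)) ^ (j + 1) := by
              rw [abs_of_nonneg hT1nn, abs_of_nonneg hT2nn]
          _ ≤ 2 * r ^ j + 2 * r ^ j := add_le_add hT1 hT2
          _ = 4 * r ^ j := by ring
      refine le_trans habsF (le_of_eq ?_)
      field_simp
      ring
  -- dominated convergence
  have main := tendsto_tsum_of_dominated_convergence hbound_sum hlim (by
    filter_upwards [h_bound] with y hy k
    simpa using hy k)
  rw [hLsum] at main
  refine main.congr' ?_
  filter_upwards [eventually_ge_atTop (1 / r + 1 - c)] with y hy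
  have hyc1 : 1 / r ≤ y + c - 1 := by linarith
  have hyc1pos : 0 < y + c - 1 := lt_of_lt_of_le (by positivity) hyc1
  have hycpos : 0 < y + c := by linarith
  have hinv1 : 1 / (y + c - 1) ≤ r := by
    rw [div_le_iff₀ hyc1pos]
    have := (div_le_iff₀ hr0).1 hyc1
    linarith [mul_comm r (y + c - 1)]
  have hinv2 : 1 / (y + c) ≤ r := by
    refine le_trans ?_ hinv1
    apply one_div_le_one_div_of_le hyc1pos
    linarith
  have habs1 : |1 / (y + c)| < ϱ := by
    rw [abs_of_pos (by positivity)]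
    linarith
  have habs2 : |1 / (y + c - 1)| < ϱ := by
    rw [abs_of_pos (by positivity)]
    linarith
  have s1 : Summable (fun k : ℕ => a k * (1 / (y + c)) ^ k) := hconv _ habs1
  have s2 : Summable (fun k : ℕ => a k * (1 / (y + c - 1)) ^ k) := hconv _ habs2
  rw [hG, hG, ← tsum_mul_left, ← tsum_mul_left,
    ← Summable.tsum_sub (s1.mul_left (y + 1)) (s2.mul_left y)]
  exact tsum_congr fun k => by rw [hFdef]; ring
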